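/- Let P(s',w|s) be a conditional probability distribution over a finite set satisfying the Gibbs-stochastic condition ∑_{s,w} P(s',w|s)·exp(β(E_{s'} − E_s + w)) = 1 for all s'. Then for any initial distribution P(s) with P(s) > 0 for all s, defining f_s = E_s + (1/β)·ln P(s), one has the generalized Jarzynski equality: ∑_{s,s',w} P(s)·P(s',w|s)·exp(β(w − f_s)) = Z'_S, where Z'_S = ∑_{s'} exp(−β·E_{s'}). -/

import Mathlib

open Real Finset

/-- Generalized Jarzynski equality for arbitrary initial states:
`⟨exp (β (w - f_s))⟩ = Z'_S`. -/
theorem generalized_jarzynski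
    {S S' W : Type*} [Fintype S] [Fintype S'] [Fintype W]
    (E : S → ℝ) (E' : S' → ℝ) (wv : W → ℝ) (β : ℝ) (hβ : 0 < β)
    (P : S' → W → S → ℝ)
    (hPnn : ∀ s' w s, 0 ≤ P s' w s)
    (hPnorm : ∀ s, ∑ s', ∑ w, P s' w s = 1)
    (hGibbs : ∀ s', ∑ s, ∑ w, P s' w s * Real.exp (β * (E' s' - E s + wv w)) = 1)
    (p : S → ℝ) (hp : ∀ s, 0 < p s) (hpnorm : ∑ s, p s = 1)
    (f : S → ℝ) (hf : ∀ s, f s = E s + (1 / β) * Real.log (p s)) :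
    ∑ s, ∑ s', ∑ w,
      p s * P s' w s * Real.exp (β * (wv w - f s)) =
      ∑ s', Real.exp (-β * E' s') := by
  have key : ∀ s s' w, p s * P s' w s * Real.exp (β * (wv w - f s)) =
      Real.exp (-β * E' s') * (P s' w s * Real.exp (β * (E' s' - E s + wv w))) := by
    intro s s' w
    rw [hf s]
    have h1 : β * (wv w - (E s + 1 / β * Real.log (p s)))
        = β * (wv w - E s) + (- Real.log (p s)) := by
      field_simp
      ring
    have h2 : β * (E' s' - E s + wv w) = β * E' s' + β * (wv w - E s) := by ring
    rw [h1, h2, Real.exp_add, Real.exp_add, Real.exp_neg, Real.exp_log (hp s)]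
    have : -β * E' s' = -(β * E' s') := by ring
    rw [this, Real.exp_neg]
    have := (Real.exp_pos (β * E' s')).ne'
    have := (hp s).ne'
    field_simp
  simp only [key]
  rw [Finset.sum_comm]
  refine Finset.sum_congr rfl fun s' _ => ?_
  simp only [← Finset.mul_sum]
  rw [hGibbs s', mul_one]
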